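/- (Radiation TOV equation as the Euler–Lagrange equation of the entropy functional.) Let R > 0 and let M : (0,R) → ℝ be twice continuously differentiable with M'(r) > 0 and r − 2·M(r) > 0 for all r ∈ (0,R). Define the Lagrangian L(r, m, q) = q^{3/4}·r^{1/2}·(1 − 2m/r)^{−1/2} for q > 0 and 1 − 2m/r > 0, and suppose M satisfies the Euler–Lagrange equation d/dr [ (∂L/∂q)(r, M(r), M'(r)) ] − (∂L/∂m)(r, M(r), M'(r)) = 0 for all r ∈ (0,R). Set ρ(r) = M'(r)/(4π r²) and p(r) = ρ(r)/3. Then for all r ∈ (0,R), p'(r) = −( ρ(r) + p(r) )·( M(r) + 4π r³ p(r) )/( r·( r − 2·M(r) ) ). -/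

import Mathlib

open Set

/-- The Euler–Lagrange equation of the entropy Lagrangian
`L(r,m,q) = q^{3/4}·r^{1/2}·(1 − 2m/r)^{−1/2}` for self-gravitating radiation implies
the radiation Tolman–Oppenheimer–Volkoff equation
`p' = −(ρ + p)(M + 4πr³p)/(r(r − 2M))` with `ρ(r) = M'(r)/(4πr²)` and `p = ρ/3`. -/
theorem stmt17 (R : ℝ) (hR : 0 < R)
    (M M' M'' : ℝ → ℝ)
    (hM_deriv : ∀ r ∈ Ioo (0 : ℝ) R, HasDerivAt M (M' r) r)
    (hM'_cont : ContinuousOn M' (Ioo 0 R))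
    (hM'_deriv : ∀ r ∈ Ioo (0 : ℝ) R, HasDerivAt M' (M'' r) r)
    (hM''_cont : ContinuousOn M'' (Ioo 0 R))
    (hM'_pos : ∀ r ∈ Ioo (0 : ℝ) R, 0 < M' r)
    (hhorizon : ∀ r ∈ Ioo (0 : ℝ) R, 0 < r - 2 * M r)
    (L : ℝ → ℝ → ℝ → ℝ)
    (hL : ∀ r m q, L r m q
      = q ^ ((3 : ℝ) / 4) * r ^ ((1 : ℝ) / 2) * (1 - 2 * m / r) ^ (-(1 : ℝ) / 2))
    (hEL : ∀ r ∈ Ioo (0 : ℝ) R,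
      HasDerivAt (fun s => deriv (fun q => L s (M s) q) (M' s))
        (deriv (fun m => L r m (M' r)) (M r)) r) :
    ∀ r ∈ Ioo (0 : ℝ) R,
      HasDerivAt (fun s => (M' s / (4 * Real.pi * s ^ 2)) / 3)
        (-((M' r / (4 * Real.pi * r ^ 2)) + (M' r / (4 * Real.pi * r ^ 2)) / 3)
            * (M r + 4 * Real.pi * r ^ 3 * ((M' r / (4 * Real.pi * r ^ 2)) / 3))
            / (r * (r - 2 * M r))) r := by
  intro r hr
  obtain ⟨hr0, hrR⟩ := hr
  have hr' : r ∈ Ioo (0:ℝ) R := ⟨hr0, hrR⟩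
  have hu : 0 < M' r := hM'_pos r hr'
  have hhor : 0 < r - 2 * M r := hhorizon r hr'
  have hw : 0 < 1 - 2 * M r / r := by
    rw [sub_pos, div_lt_one hr0]; linarith
  -- Step A : formula for the q-partial derivative at each s
  have hderivL : ∀ s ∈ Ioo (0:ℝ) R,
      deriv (fun q => L s (M s) q) (M' s)
        = 3 / 4 * (M' s) ^ ((3:ℝ)/4 - 1) * s ^ ((1:ℝ)/2) * (1 - 2 * M s / s) ^ (-(1:ℝ)/2) := by
    intro s hs
    have h1 : HasDerivAt (fun q => L s (M s) q)
        ((3:ℝ)/4 * (M' s) ^ ((3:ℝ)/4 - 1) * s ^ ((1:ℝ)/2) * (1 - 2 * M s / s) ^ (-(1:ℝ)/2)) (M' s) := by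
      simp only [hL]
      exact ((Real.hasDerivAt_rpow_const (Or.inl (hM'_pos s hs).ne')).mul_const _).mul_const _
    rw [h1.deriv]
  -- Step B : explicit value of the m-partial derivative at r
  have hin2 : HasDerivAt (fun m => 1 - 2 * m / r) (0 - 2 * 1 / r) (M r) :=
    (hasDerivAt_const _ (1:ℝ)).sub (((hasDerivAt_id (M r)).const_mul 2).div_const r)
  have hD : HasDerivAt (fun m => L r m (M' r))
      ((M' r) ^ ((3:ℝ)/4) * r ^ ((1:ℝ)/2) *
        ((0 - 2 * 1 / r) * (-(1:ℝ)/2) * (1 - 2 * M r / r) ^ (-(1:ℝ)/2 - 1))) (M r) := by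
    simp only [hL]
    have := (hin2.rpow_const (p := -(1:ℝ)/2) (Or.inl hw.ne')).const_mul
      ((M' r) ^ ((3:ℝ)/4) * r ^ ((1:ℝ)/2))
    simpa [mul_assoc] using this
  -- the function g given by the formula
  set g : ℝ → ℝ := fun s =>
    3 / 4 * (M' s) ^ ((3:ℝ)/4 - 1) * s ^ ((1:ℝ)/2) * (1 - 2 * M s / s) ^ (-(1:ℝ)/2) with hg_def
  have hf : HasDerivAt g
      ((M' r) ^ ((3:ℝ)/4) * r ^ ((1:ℝ)/2) *
        ((0 - 2 * 1 / r) * (-(1:ℝ)/2) * (1 - 2 * M r / r) ^ (-(1:ℝ)/2 - 1))) r := by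
    have h := hEL r hr'
    rw [hD.deriv] at h
    refine h.congr_of_eventuallyEq ?_
    filter_upwards [isOpen_Ioo.mem_nhds hr'] with s hs
    exact (hderivL s hs).symm
  -- explicit derivative of g at r
  have hT : HasDerivAt (fun s => (M' s) ^ ((3:ℝ)/4 - 1))
      (M'' r * ((3:ℝ)/4 - 1) * (M' r) ^ ((3:ℝ)/4 - 1 - 1)) r :=
    (hM'_deriv r hr').rpow_const (Or.inl hu.ne')
  have hS : HasDerivAt (fun s : ℝ => s ^ ((1:ℝ)/2)) ((1:ℝ)/2 * r ^ ((1:ℝ)/2 - 1)) r :=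
    Real.hasDerivAt_rpow_const (Or.inl hr0.ne')
  have hwin : HasDerivAt (fun s => 1 - 2 * M s / s)
      (0 - (2 * M' r * r - 2 * M r * 1) / r ^ 2) r :=
    (hasDerivAt_const _ (1:ℝ)).sub (((hM_deriv r hr').const_mul 2).div (hasDerivAt_id r) hr0.ne')
  have hW : HasDerivAt (fun s => (1 - 2 * M s / s) ^ (-(1:ℝ)/2))
      ((0 - (2 * M' r * r - 2 * M r * 1) / r ^ 2) * (-(1:ℝ)/2) *
        (1 - 2 * M r / r) ^ (-(1:ℝ)/2 - 1)) r :=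
    hwin.rpow_const (Or.inl hw.ne')
  have hg : HasDerivAt g
      ((((M'' r * ((3:ℝ)/4 - 1) * (M' r) ^ ((3:ℝ)/4 - 1 - 1)) * (3/4)) * (r ^ ((1:ℝ)/2))
          + (3 / 4 * (M' r) ^ ((3:ℝ)/4 - 1)) * ((1:ℝ)/2 * r ^ ((1:ℝ)/2 - 1)))
          * ((1 - 2 * M r / r) ^ (-(1:ℝ)/2))
        + (3 / 4 * (M' r) ^ ((3:ℝ)/4 - 1) * r ^ ((1:ℝ)/2)) *
          ((0 - (2 * M' r * r - 2 * M r * 1) / r ^ 2) * (-(1:ℝ)/2) *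
            (1 - 2 * M r / r) ^ (-(1:ℝ)/2 - 1))) r := by
    have := ((hT.const_mul (3/4 : ℝ)).mul hS).mul hW
    exact this.congr_deriv (by simp only [Pi.mul_apply]; ring)
  have hVD := hg.unique hf
  -- rewrite the rpow atoms
  have e1 : (M' r) ^ ((3:ℝ)/4 - 1 - 1) = (M' r) ^ ((3:ℝ)/4 - 1) / M' r := by
    rw [Real.rpow_sub hu, Real.rpow_one]
  have e2 : r ^ ((1:ℝ)/2 - 1) = r ^ ((1:ℝ)/2) / r := by
    rw [Real.rpow_sub hr0, Real.rpow_one]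
  have e3 : (1 - 2 * M r / r) ^ (-(1:ℝ)/2 - 1)
      = (1 - 2 * M r / r) ^ (-(1:ℝ)/2) / (1 - 2 * M r / r) := by
    rw [Real.rpow_sub hw, Real.rpow_one]
  have e4 : (M' r) ^ ((3:ℝ)/4) = (M' r) ^ ((3:ℝ)/4 - 1) * M' r := by
    rw [← Real.rpow_add_one hu.ne']; norm_num
  rw [e1, e2, e3, e4] at hVD
  set T := (M' r) ^ ((3:ℝ)/4 - 1) with hT_def
  set S := r ^ ((1:ℝ)/2) with hS_def
  set W := (1 - 2 * M r / r) ^ (-(1:ℝ)/2) with hW_def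
  have hTp : 0 < T := Real.rpow_pos_of_pos hu _
  have hSp : 0 < S := Real.rpow_pos_of_pos hr0 _
  have hWp : 0 < W := Real.rpow_pos_of_pos hw _
  have h3 : (T * (S * W)) * (M'' r * ((3:ℝ)/4 - 1) * (3/4) / M' r + 3/4 * (1/2) / r
        + 3/4 * ((0 - (2 * M' r * r - 2 * M r * 1) / r ^ 2) * (-(1:ℝ)/2) / (1 - 2 * M r / r)))
      = (T * (S * W)) * (M' r * ((0 - 2 * 1 / r) * (-(1:ℝ)/2) / (1 - 2 * M r / r))) := by
    linear_combination hVD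
  have hXY := mul_left_cancel₀ (by positivity : (T * (S * W)) ≠ 0) h3
  have key : M'' r * r * (r - 2 * M r)
      = 2 * M' r * r - 8 * M' r * M r - 4/3 * (M' r)^2 * r := by
    have h1 : (1 - 2 * M r / r) ≠ 0 := hw.ne'
    field_simp at hXY
    have h4 : (r^3 * (r - 2 * M r)) * (M'' r * r * (r - 2 * M r))
        = (r^3 * (r - 2 * M r)) * (2 * M' r * r - 8 * M' r * M r - 4/3 * (M' r)^2 * r) := by
      linear_combination (-1/6 * r^3 * (r - 2 * M r)) * hXY
    exact mul_left_cancel₀ (by positivity) h4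
  -- the derivative of the pressure
  have hpi := Real.pi_pos
  have hden : HasDerivAt (fun s : ℝ => 4 * Real.pi * s ^ 2) (4 * Real.pi * (2 * r ^ 1)) r :=
    (hasDerivAt_pow 2 r).const_mul (4 * Real.pi)
  have hp : HasDerivAt (fun s => (M' s / (4 * Real.pi * s ^ 2)) / 3)
      (((M'' r * (4 * Real.pi * r ^ 2) - M' r * (4 * Real.pi * (2 * r ^ 1)))
        / (4 * Real.pi * r ^ 2) ^ 2) / 3) r :=
    ((hM'_deriv r hr').div hden (by positivity)).div_const 3
  convert hp using 1
  have hv : M'' r = (2 * M' r * r - 8 * M' r * M r - 4/3 * (M' r)^2 * r)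
      / (r * (r - 2 * M r)) := by
    rw [eq_div_iff (by positivity)]
    linear_combination key
  rw [hv]
  have hne : r - 2 * M r ≠ 0 := hhor.ne'
  field_simp
  have hx : (-(M r * 2) + r)⁻¹ * (-(M r * 2) + r) = 1 := inv_mul_cancel₀ (by linarith)
  linear_combination (-6 : ℝ) * hx
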